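/- Let ε ∈ (0, 1), μ₀ > 0 and τ > 0, set μ(t) = μ₀·e^{−t/τ}, and let C_E, C_RE : [0, ∞) → ℝ be differentiable with C_E′(t) = −((1−ε)/ε)·μ(t)·(C_E(t) − C_RE(t)), C_RE′(t) = μ(t)·(C_E(t) − C_RE(t)), and C_E(0) > C_RE(0). Then C_E(t) − C_RE(t) = (C_E(0) − C_RE(0))·exp(−(μ₀τ/ε)·(1 − e^{−t/τ})) for all t ≥ 0, and as t → ∞ the difference tends to the strictly positive limit (C_E(0) − C_RE(0))·exp(−μ₀τ/ε). In particular, after a single electroporation pulse with membrane resealing, the extracellular and intracellular concentrations never fully equilibrate. -/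

import Mathlib

/-- After a single electroporation pulse with resealing MTC
μ(t) = μ₀·e^{−t/τ}, the concentration difference satisfies
C_E(t) − C_RE(t) = (C_E(0) − C_RE(0))·exp(−(μ₀τ/ε)·(1 − e^{−t/τ})) and tends,
as t → ∞, to the strictly positive limit (C_E(0) − C_RE(0))·exp(−μ₀τ/ε):
the two compartments never fully equilibrate. -/
theorem single_pulse_never_equilibrates
    (ε μ₀ τ : ℝ) (hε : ε ∈ Set.Ioo (0 : ℝ) 1) (hμ₀ : 0 < μ₀) (hτ : 0 < τ)
    (μ CE CRE : ℝ → ℝ) (hμ : ∀ t : ℝ, μ t = μ₀ * Real.exp (-t / τ))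
    (hCE : ∀ t ∈ Set.Ici (0 : ℝ),
      HasDerivAt CE (-((1 - ε) / ε) * μ t * (CE t - CRE t)) t)
    (hCRE : ∀ t ∈ Set.Ici (0 : ℝ),
      HasDerivAt CRE (μ t * (CE t - CRE t)) t)
    (h0 : CRE 0 < CE 0) :
    (∀ t ∈ Set.Ici (0 : ℝ),
      CE t - CRE t =
        (CE 0 - CRE 0) * Real.exp (-(μ₀ * τ / ε) * (1 - Real.exp (-t / τ)))) ∧
    Filter.Tendsto (fun t => CE t - CRE t) Filter.atTop
      (nhds ((CE 0 - CRE 0) * Real.exp (-(μ₀ * τ / ε)))) ∧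
    0 < (CE 0 - CRE 0) * Real.exp (-(μ₀ * τ / ε)) := by
  obtain ⟨hε0, hε1⟩ := hε
  have hεne : ε ≠ 0 := ne_of_gt hε0
  have hτne : τ ≠ 0 := ne_of_gt hτ
  set D : ℝ → ℝ := fun t => CE t - CRE t with hD
  set h : ℝ := μ₀ * τ / ε with hh
  set g : ℝ → ℝ := fun t => D t * Real.exp (h * (1 - Real.exp (-t / τ))) with hg
  -- g has derivative 0 on Ici 0
  have hgderiv : ∀ t ∈ Set.Ici (0 : ℝ), HasDerivAt g 0 t := by
    intro t ht
    have hDd : HasDerivAt D (-(1 / ε) * μ t * D t) t := by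
      have := (hCE t ht).sub (hCRE t ht)
      refine this.congr_deriv ?_
      simp only [hD]
      field_simp
      ring
    have hE : HasDerivAt (fun t => Real.exp (h * (1 - Real.exp (-t / τ))))
        (Real.exp (h * (1 - Real.exp (-t / τ))) * ((1 / ε) * μ t)) t := by
      have h1 : HasDerivAt (fun t : ℝ => -t / τ) (-1 / τ) t := by
        simpa using (hasDerivAt_id t).neg.div_const τ
      have h2 : HasDerivAt (fun t : ℝ => Real.exp (-t / τ))
          (Real.exp (-t / τ) * (-1 / τ)) t := h1.exp
      have h3 := ((hasDerivAt_const t (1 : ℝ)).sub h2).const_mul h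
      have h4 := h3.exp
      refine h4.congr_deriv ?_
      rw [hμ, hh, Pi.sub_apply]
      field_simp
      ring
    have := hDd.mul hE
    refine this.congr_deriv ?_
    ring
  have hgconst : ∀ t ∈ Set.Ici (0 : ℝ), g t = g 0 := by
    intro t ht
    rcases eq_or_lt_of_le (Set.mem_Ici.mp ht) with h' | h'
    · rw [← h']
    · have hdiff : DifferentiableOn ℝ g (Set.Icc 0 t) := fun x hx =>
        (hgderiv x (Set.mem_Ici.mpr hx.1)).differentiableAt.differentiableWithinAt
      have hder : ∀ x ∈ Set.Ico (0 : ℝ) t, derivWithin g (Set.Icc 0 t) x = 0 := by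
        intro x hx
        have := (hgderiv x (Set.mem_Ici.mpr hx.1)).hasDerivWithinAt
          (s := Set.Icc (0 : ℝ) t)
        exact this.derivWithin ((uniqueDiffOn_Icc h') x ⟨hx.1, le_of_lt hx.2⟩)
      exact constant_of_derivWithin_zero hdiff hder t (Set.mem_Icc.mpr ⟨le_of_lt h', le_rfl⟩)
  have hg0 : g 0 = D 0 := by simp [hg]
  have hmain : ∀ t ∈ Set.Ici (0 : ℝ),
      D t = D 0 * Real.exp (-(μ₀ * τ / ε) * (1 - Real.exp (-t / τ))) := by
    intro t ht
    have := (hgconst t ht).trans hg0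
    have hEpos : Real.exp (h * (1 - Real.exp (-t / τ))) ≠ 0 := (Real.exp_pos _).ne'
    have hDt : D t = D 0 / Real.exp (h * (1 - Real.exp (-t / τ))) :=
      (eq_div_iff hEpos).mpr this
    rw [hDt, ← hh, neg_mul, Real.exp_neg, div_eq_mul_inv]
  refine ⟨hmain, ?_, ?_⟩
  · -- limit
    have hlim : Filter.Tendsto (fun t : ℝ =>
        D 0 * Real.exp (-(μ₀ * τ / ε) * (1 - Real.exp (-t / τ))))
        Filter.atTop (nhds (D 0 * Real.exp (-(μ₀ * τ / ε) * (1 - 0)))) := by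
      apply Filter.Tendsto.const_mul
      apply Real.continuous_exp.continuousAt.tendsto.comp
      apply Filter.Tendsto.const_mul
      apply Filter.Tendsto.const_sub
      refine Real.tendsto_exp_atBot.comp ?_
      have h5 : Filter.Tendsto (fun t : ℝ => t / τ) Filter.atTop Filter.atTop :=
        Filter.Tendsto.atTop_div_const hτ Filter.tendsto_id
      exact (Filter.tendsto_neg_atTop_atBot.comp h5).congr fun x => (neg_div τ x).symm
    have heq : Filter.Tendsto (fun t : ℝ => D t) Filter.atTop
        (nhds (D 0 * Real.exp (-(μ₀ * τ / ε) * (1 - 0)))) := by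
      refine hlim.congr' ?_
      filter_upwards [Filter.eventually_ge_atTop (0 : ℝ)] with t ht
      exact (hmain t ht).symm
    simpa using heq
  · exact mul_pos (sub_pos.mpr h0) (Real.exp_pos _)
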